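/- Let D ⊆ ℝⁿ be compact convex and f twice continuously differentiable and convex on D. Then the curvature constant C_f := sup over x, s ∈ D, α ∈ [0,1], y = x + α(s - x) of (1/α²)(f(y) - f(x) - ⟨y - x, ∇f(x)⟩) satisfies C_f ≤ (1/2)·diam(D)² · sup_{z ∈ D} λ_max(∇²f(z)), where diam is the Euclidean diameter and λ_max denotes the largest eigenvalue. -/

import Mathlib

open Matrix in
lemma rayleigh_bound {n : ℕ} (A : Matrix (Fin n) (Fin n) ℝ) (hA : A.IsHermitian)
    (v : EuclideanSpace ℝ (Fin n)) :
    ∑ k, v k * ∑ l, A k l * v l ≤ (⨆ i, hA.eigenvalues i) * ‖v‖ ^ 2 := by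
  have hle : ∀ i, hA.eigenvalues i ≤ ⨆ i, hA.eigenvalues i :=
    fun i => le_ciSup (Set.Finite.bddAbove (Set.finite_range _)) i
  set b := hA.eigenvectorBasis with hb
  have hsymm : ∀ k l, A k l = A l k := by
    intro k l; simpa using hA.apply l k
  have hinner : ∀ x y : EuclideanSpace ℝ (Fin n), (inner ℝ x y : ℝ) = ∑ k, x k * y k := by
    intro x y
    simp [PiLp.inner_apply, RCLike.inner_apply]
    exact Finset.sum_congr rfl fun _ _ => mul_comm _ _
  set w : EuclideanSpace ℝ (Fin n) := Matrix.toEuclideanLin A v with hwdef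
  have hwk : ∀ k, w k = ∑ l, A k l * v l := by
    intro k
    show (A *ᵥ (fun l => v l)) k = _
    simp [Matrix.mulVec, dotProduct]
  have hmv : ∀ i l, ∑ k, A l k * (b i) k = hA.eigenvalues i * (b i) l := by
    intro i l
    have := congr_fun (hA.mulVec_eigenvectorBasis i) l
    simpa [Matrix.mulVec, dotProduct] using this
  have hbi : ∀ i, (inner ℝ (b i) w : ℝ) = hA.eigenvalues i * (inner ℝ (b i) v : ℝ) := by
    intro i
    rw [hinner, hinner]
    calc ∑ k, (b i) k * w k = ∑ k, ∑ l, (b i) k * (A k l * v l) := by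
          simp_rw [hwk, Finset.mul_sum]
      _ = ∑ l, (∑ k, A l k * (b i) k) * v l := by
          rw [Finset.sum_comm]
          congr 1; ext l
          rw [Finset.sum_mul]
          congr 1; ext k
          rw [hsymm k l]; ring
      _ = ∑ l, hA.eigenvalues i * ((b i) l * v l) := by
          congr 1; ext l; rw [hmv i l]; ring
      _ = hA.eigenvalues i * ∑ l, (b i) l * v l := by rw [Finset.mul_sum]
  have hparse : (inner ℝ v w : ℝ) = ∑ i, (inner ℝ v (b i) : ℝ) * (inner ℝ (b i) w : ℝ) :=
    (b.sum_inner_mul_inner v w).symm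
  have hnorm : ∑ i, (inner ℝ v (b i) : ℝ) * (inner ℝ (b i) v : ℝ) = ‖v‖ ^ 2 := by
    rw [b.sum_inner_mul_inner v v, real_inner_self_eq_norm_sq]
  have hlhs : ∑ k, v k * ∑ l, A k l * v l = (inner ℝ v w : ℝ) := by
    rw [hinner]
    exact Finset.sum_congr rfl fun k _ => by rw [hwk]
  rw [hlhs, hparse]
  calc ∑ i, (inner ℝ v (b i) : ℝ) * (inner ℝ (b i) w : ℝ)
      = ∑ i, hA.eigenvalues i * ((inner ℝ v (b i) : ℝ) * (inner ℝ (b i) v : ℝ)) := by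
        congr 1; ext i; rw [hbi i]; ring
    _ ≤ ∑ i, (⨆ j, hA.eigenvalues j) * ((inner ℝ v (b i) : ℝ) * (inner ℝ (b i) v : ℝ)) := by
        apply Finset.sum_le_sum
        intro i _
        apply mul_le_mul_of_nonneg_right (hle i)
        rw [real_inner_comm (b i) v]
        exact mul_self_nonneg _
    _ = (⨆ j, hA.eigenvalues j) * ‖v‖ ^ 2 := by rw [← Finset.mul_sum, hnorm]


open Matrix in
lemma eigenvalue_le_sum_abs {n : ℕ} (A : Matrix (Fin n) (Fin n) ℝ) (hA : A.IsHermitian) :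
    (⨆ i, hA.eigenvalues i) ≤ ∑ k, ∑ l, |A k l| := by
  rcases isEmpty_or_nonempty (Fin n) with he | hne
  · rw [Real.iSup_of_isEmpty]
    positivity
  apply ciSup_le
  intro i
  set b := hA.eigenvectorBasis with hb
  have hmv : ∀ l, ∑ k, A l k * (b i) k = hA.eigenvalues i * (b i) l := by
    intro l
    have := congr_fun (hA.mulVec_eigenvectorBasis i) l
    simpa [Matrix.mulVec, dotProduct] using this
  have hnb : ‖b i‖ = 1 := b.orthonormal.1 i
  have hcoord : ∀ k, |(b i) k| ≤ 1 := by
    intro k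
    have h1 : ((b i) k : ℝ) = inner ℝ (EuclideanSpace.single k (1:ℝ)) (b i) := by
      rw [EuclideanSpace.inner_single_left]; simp
    have h2 := abs_real_inner_le_norm (EuclideanSpace.single k (1:ℝ)) (b i)
    rw [← h1] at h2
    simpa [EuclideanSpace.norm_single, hnb] using h2
  have hsq : ∑ k, (b i) k * (b i) k = 1 := by
    have := real_inner_self_eq_norm_sq (b i)
    rw [hnb] at this
    simp only [PiLp.inner_apply, RCLike.inner_apply, starRingEnd_apply, star_trivial] at this
    simpa using this
  have hid : hA.eigenvalues i = ∑ l, (b i) l * ∑ k, A l k * (b i) k := by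
    have : ∑ l, (b i) l * ∑ k, A l k * (b i) k
        = ∑ l, hA.eigenvalues i * ((b i) l * (b i) l) := by
      refine Finset.sum_congr rfl fun l _ => ?_
      rw [hmv l]; ring
    rw [this, ← Finset.mul_sum, hsq, mul_one]
  rw [hid]
  calc ∑ l, (b i) l * ∑ k, A l k * (b i) k
      ≤ ∑ l, |(b i) l * ∑ k, A l k * (b i) k| :=
        Finset.sum_le_sum fun l _ => le_abs_self _
    _ ≤ ∑ l, ∑ k, |A l k| := by
        apply Finset.sum_le_sum
        intro l _
        rw [abs_mul]
        calc |(b i) l| * |∑ k, A l k * (b i) k| ≤ 1 * |∑ k, A l k * (b i) k| :=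
              mul_le_mul_of_nonneg_right (hcoord l) (abs_nonneg _)
          _ = |∑ k, A l k * (b i) k| := one_mul _
          _ ≤ ∑ k, |A l k * (b i) k| := Finset.abs_sum_le_sum_abs _ _
          _ ≤ ∑ k, |A l k| := by
              apply Finset.sum_le_sum
              intro k _
              rw [abs_mul]
              calc |A l k| * |(b i) k| ≤ |A l k| * 1 :=
                    mul_le_mul_of_nonneg_left (hcoord k) (abs_nonneg _)
                _ = |A l k| := mul_one _


lemma euclidean_sum_single {n : ℕ} (v : EuclideanSpace ℝ (Fin n)) :
    ∑ k, v k • EuclideanSpace.single k (1 : ℝ) = v := by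
  have := (EuclideanSpace.basisFun (Fin n) ℝ).sum_repr' v
  simp only [EuclideanSpace.basisFun_apply] at this
  convert this using 2 with k
  rw [EuclideanSpace.inner_single_left]
  simp


lemma bilin_expand {n : ℕ} (B : EuclideanSpace ℝ (Fin n) →L[ℝ] EuclideanSpace ℝ (Fin n) →L[ℝ] ℝ)
    (v : EuclideanSpace ℝ (Fin n)) :
    B v v = ∑ k, v k * ∑ l, B (EuclideanSpace.single k 1) (EuclideanSpace.single l 1) * v l := by
  have h2 : ∀ u : EuclideanSpace ℝ (Fin n),
      B u v = ∑ l, B u (EuclideanSpace.single l 1) * v l := by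
    intro u
    conv_lhs => rw [← euclidean_sum_single v]
    rw [map_sum]
    exact Finset.sum_congr rfl fun l _ => by rw [map_smul, smul_eq_mul, mul_comm]
  have h1 : ∀ w : EuclideanSpace ℝ (Fin n),
      B v w = ∑ k, v k * B (EuclideanSpace.single k 1) w := by
    intro w
    conv_lhs => rw [← euclidean_sum_single v]
    rw [map_sum, ContinuousLinearMap.sum_apply]
    exact Finset.sum_congr rfl fun k _ => by
      rw [map_smul, ContinuousLinearMap.smul_apply, smul_eq_mul]
  rw [h1]
  exact Finset.sum_congr rfl fun k _ => by rw [h2]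


lemma line_hasDerivAt {n : ℕ} {f : EuclideanSpace ℝ (Fin n) → ℝ} (hf : ContDiff ℝ 2 f)
    (x v : EuclideanSpace ℝ (Fin n)) (t : ℝ) :
    HasDerivAt (fun t : ℝ => f (x + t • v)) (fderiv ℝ f (x + t • v) v) t := by
  have hL : HasDerivAt (fun t : ℝ => x + t • v) v t := by
    simpa using ((hasDerivAt_id t).smul_const v).const_add x
  have hfd : HasFDerivAt f (fderiv ℝ f (x + t • v)) (x + t • v) :=
    (hf.differentiable (by norm_num)).differentiableAt.hasFDerivAt
  exact hfd.comp_hasDerivAt t hL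


lemma line_hasDerivAt2 {n : ℕ} {f : EuclideanSpace ℝ (Fin n) → ℝ} (hf : ContDiff ℝ 2 f)
    (x v : EuclideanSpace ℝ (Fin n)) (t : ℝ) :
    HasDerivAt (fun t : ℝ => fderiv ℝ f (x + t • v) v)
      (fderiv ℝ (fderiv ℝ f) (x + t • v) v v) t := by
  have hL : HasDerivAt (fun t : ℝ => x + t • v) v t := by
    simpa using ((hasDerivAt_id t).smul_const v).const_add x
  have hdf : ContDiff ℝ 1 (fderiv ℝ f) := hf.fderiv_right (by norm_num)
  have hfd2 : HasFDerivAt (fderiv ℝ f) (fderiv ℝ (fderiv ℝ f) (x + t • v)) (x + t • v) :=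
    (hdf.differentiable (by norm_num)).differentiableAt.hasFDerivAt
  have hcomp : HasDerivAt (fun t : ℝ => fderiv ℝ f (x + t • v))
      (fderiv ℝ (fderiv ℝ f) (x + t • v) v) t := by
    exact hfd2.comp_hasDerivAt t hL
  simpa using hcomp.clm_apply (hasDerivAt_const t v)


lemma deriv_nonneg_of_monotoneOn {φ : ℝ → ℝ} {a b t m : ℝ} (hat : a < t) (htb : t < b)
    (hmono : MonotoneOn φ (Set.Ioo a b)) (hd : HasDerivAt φ m t) : 0 ≤ m := by
  have h := hasDerivAt_iff_tendsto_slope.mp hd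
  have h2 : Filter.Tendsto (slope φ t) (nhdsWithin t (Set.Ioi t)) (nhds m) :=
    h.mono_left (nhdsWithin_mono t fun u hu => ne_of_gt hu)
  refine ge_of_tendsto h2 ?_
  filter_upwards [Ioo_mem_nhdsGT_of_mem ⟨le_rfl, htb⟩] with u hu
  rw [slope_def_field]
  apply div_nonneg
  · have : φ t ≤ φ u := hmono ⟨hat, htb⟩ ⟨hat.trans hu.1, hu.2⟩ hu.1.le
    linarith
  · linarith [hu.1]


lemma taylor_like_bound {g gd g2 : ℝ → ℝ} {α M : ℝ} (hα : 0 < α)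
    (hg : ∀ t, HasDerivAt g (gd t) t) (hgd : ∀ t, HasDerivAt gd (g2 t) t)
    (hM : ∀ t ∈ Set.Ioo 0 α, g2 t ≤ M) :
    g α - g 0 - α * gd 0 ≤ M * α ^ 2 / 2 := by
  set h : ℝ → ℝ := fun t => g t - g 0 - t * gd 0 - M * t ^ 2 / 2 with hh
  set hd : ℝ → ℝ := fun t => gd t - gd 0 - M * t with hhd
  have hder : ∀ t, HasDerivAt h (hd t) t := by
    intro t
    have h1 : HasDerivAt (fun t : ℝ => g t - g 0 - t * gd 0 - M * t ^ 2 / 2)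
        (gd t - gd 0 - M * t) t := by
      have := (((hg t).sub_const (g 0)).sub (hasDerivAt_mul_const (gd 0))).sub
        ((((hasDerivAt_pow 2 t).const_mul M)).div_const 2)
      refine this.congr_deriv ?_
      simp
      ring
    exact h1
  have hder2 : ∀ t, HasDerivAt hd (g2 t - M) t := by
    intro t
    have := ((hgd t).sub_const (gd 0)).sub ((hasDerivAt_id t).const_mul M)
    simp only [mul_one] at this
    exact this
  have hdanti : AntitoneOn hd (Set.Icc 0 α) := by
    apply antitoneOn_of_deriv_nonpos (convex_Icc 0 α)
    · exact fun t _ => (hder2 t).continuousAt.continuousWithinAt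
    · intro t _
      exact (hder2 t).differentiableAt.differentiableWithinAt
    · intro t ht
      rw [interior_Icc] at ht
      rw [(hder2 t).deriv]
      linarith [hM t ht]
  have hd0 : hd 0 = 0 := by simp [hhd]
  have hdnonpos : ∀ t ∈ Set.Ioo 0 α, deriv h t ≤ 0 := by
    intro t ht
    rw [(hder t).deriv]
    have := hdanti (Set.left_mem_Icc.mpr hα.le) ⟨ht.1.le, ht.2.le⟩ ht.1.le
    rw [hd0] at this
    exact this
  have hanti : AntitoneOn h (Set.Icc 0 α) := by
    apply antitoneOn_of_deriv_nonpos (convex_Icc 0 α)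
    · exact fun t _ => (hder t).continuousAt.continuousWithinAt
    · intro t _
      exact (hder t).differentiableAt.differentiableWithinAt
    · intro t ht
      rw [interior_Icc] at ht
      exact hdnonpos t ht
  have hfin : h α ≤ h 0 := hanti (Set.left_mem_Icc.mpr hα.le) (Set.right_mem_Icc.mpr hα.le) hα.le
  have h0 : h 0 = 0 := by simp [hh]
  rw [h0] at hfin
  simp only [hh] at hfin
  linarith


open Matrix in
/-- The curvature constant `C_f` of a twice continuously differentiable convex function
over a compact convex domain `D ⊆ ℝⁿ` is at most
`(1/2) · diam(D)² · sup_{z ∈ D} λ_max(∇²f(z))`. -/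
theorem curvature_le_diam_sq_mul_sup_lambdaMax_hessian
    {n : ℕ} (D : Set (EuclideanSpace ℝ (Fin n)))
    (hDcomp : IsCompact D) (hDconv : Convex ℝ D)
    (f : EuclideanSpace ℝ (Fin n) → ℝ)
    (hf : ContDiff ℝ 2 f) (hconv : ConvexOn ℝ D f)
    (H : EuclideanSpace ℝ (Fin n) → Matrix (Fin n) (Fin n) ℝ)
    (hH : ∀ z, H z = Matrix.of fun i j =>
      iteratedFDeriv ℝ 2 f z ![EuclideanSpace.single i (1 : ℝ), EuclideanSpace.single j (1 : ℝ)])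
    (hHerm : ∀ z, (H z).IsHermitian) :
    sSup {r : ℝ | ∃ x ∈ D, ∃ s ∈ D, ∃ α ∈ Set.Icc (0 : ℝ) 1,
        r = (1 / α ^ 2) *
          (f (x + α • (s - x)) - f x - inner ℝ (x + α • (s - x) - x) (gradient f x))} ≤
      (1 / 2) * Metric.diam D ^ 2 * sSup ((fun z => ⨆ i, (hHerm z).eigenvalues i) '' D) := by
  classical
  set S := sSup ((fun z => ⨆ i, (hHerm z).eigenvalues i) '' D) with hSdef
  -- entries of `H`
  have hent : ∀ z (k l : Fin n), H z k l
      = fderiv ℝ (fderiv ℝ f) z (EuclideanSpace.single k 1) (EuclideanSpace.single l 1) := by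
    intro z k l
    rw [hH z]
    show iteratedFDeriv ℝ 2 f z ![_, _] = _
    rw [iteratedFDeriv_two_apply]
    simp
  -- quadratic form bound
  have hquad : ∀ (z : EuclideanSpace ℝ (Fin n)) (v : EuclideanSpace ℝ (Fin n)),
      fderiv ℝ (fderiv ℝ f) z v v ≤ (⨆ i, (hHerm z).eigenvalues i) * ‖v‖ ^ 2 := by
    intro z v
    rw [bilin_expand]
    refine le_trans (le_of_eq ?_) (rayleigh_bound (H z) (hHerm z) v)
    refine Finset.sum_congr rfl fun k _ => ?_
    congr 1
    exact Finset.sum_congr rfl fun l _ => by rw [hent z k l]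
  -- boundedness of the eigenvalue image
  have hφcont : Continuous fun z => ∑ k, ∑ l, |H z k l| := by
    apply continuous_finset_sum; intro k _
    apply continuous_finset_sum; intro l _
    apply Continuous.abs
    have h1 : Continuous fun z => iteratedFDeriv ℝ 2 f z
        ![EuclideanSpace.single k (1:ℝ), EuclideanSpace.single l (1:ℝ)] :=
      (continuous_eval_const _).comp (hf.continuous_iteratedFDeriv le_rfl)
    simpa only [hH, Matrix.of_apply] using h1
  have hbddA : BddAbove ((fun z => ⨆ i, (hHerm z).eigenvalues i) '' D) := by
    obtain ⟨C, hC⟩ := (hDcomp.image hφcont).bddAbove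
    refine ⟨C, ?_⟩
    rintro y ⟨z, hz, rfl⟩
    exact le_trans (eigenvalue_le_sum_abs (H z) (hHerm z))
      (hC (Set.mem_image_of_mem _ hz))
  have hlam_le : ∀ z ∈ D, (⨆ i, (hHerm z).eigenvalues i) ≤ S :=
    fun z hz => le_csSup hbddA (Set.mem_image_of_mem _ hz)
  by_cases hdiam0 : Metric.diam D = 0
  · -- degenerate case: diameter zero
    have hRHS : 1 / 2 * Metric.diam D ^ 2 * S = 0 := by rw [hdiam0]; ring
    rw [hRHS]
    apply Real.sSup_le _ le_rfl
    rintro r ⟨x, hx, s, hs, α, hα, rfl⟩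
    have hsx : s = x := by
      have h := Metric.dist_le_diam_of_mem hDcomp.isBounded hs hx
      rw [hdiam0] at h
      exact dist_le_zero.mp h
    subst hsx
    simp
  · have hdp : 0 < Metric.diam D := lt_of_le_of_ne Metric.diam_nonneg (Ne.symm hdiam0)
    -- two distinct points
    have hex : ∃ x₀ ∈ D, ∃ s₀ ∈ D, s₀ ≠ x₀ := by
      by_contra h
      push_neg at h
      apply hdiam0
      refine le_antisymm ?_ Metric.diam_nonneg
      refine Metric.diam_le_of_forall_dist_le le_rfl fun x hx y hy => ?_
      rw [h y hy x hx]
      simp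
    obtain ⟨x₀, hx₀, s₀, hs₀, hne⟩ := hex
    -- nonnegativity of S
    have hS0 : 0 ≤ S := by
      set v := s₀ - x₀ with hvdef
      have hv : v ≠ 0 := sub_ne_zero.mpr hne
      have hg := line_hasDerivAt hf x₀ v
      have hgd := line_hasDerivAt2 hf x₀ v
      have hmem : ∀ t ∈ Set.Icc (0:ℝ) 1, x₀ + t • v ∈ D :=
        fun t ht => hDconv.add_smul_sub_mem hx₀ hs₀ ht
      have hgconv : ConvexOn ℝ (Set.Icc (0:ℝ) 1) (fun t : ℝ => f (x₀ + t • v)) := by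
        have h1 := (hconv.comp_affineMap (AffineMap.lineMap x₀ s₀))
        have h2 : (f ∘ (AffineMap.lineMap x₀ s₀ : ℝ →ᵃ[ℝ] EuclideanSpace ℝ (Fin n)))
            = fun t : ℝ => f (x₀ + t • v) := by
          funext t
          simp [AffineMap.lineMap_apply, hvdef, add_comm]
        rw [h2] at h1
        apply h1.subset _ (convex_Icc 0 1)
        intro t ht
        have : AffineMap.lineMap x₀ s₀ t ∈ D := by
          have := hmem t ht
          simpa [AffineMap.lineMap_apply, hvdef, add_comm] using this
        exact this
      have hdiffg : ∀ t ∈ Set.Icc (0:ℝ) 1,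
          DifferentiableAt ℝ (fun t : ℝ => f (x₀ + t • v)) t :=
        fun t _ => (hg t).differentiableAt
      have hmono := hgconv.monotoneOn_deriv hdiffg
      have hmono' : MonotoneOn (fun t => fderiv ℝ f (x₀ + t • v) v) (Set.Ioo (0:ℝ) 1) := by
        intro a ha b hb hab
        have h := hmono (Set.mem_Icc_of_Ioo ha) (Set.mem_Icc_of_Ioo hb) hab
        rwa [(hg a).deriv, (hg b).deriv] at h
      have hq : 0 ≤ fderiv ℝ (fderiv ℝ f) (x₀ + (2⁻¹:ℝ) • v) v v :=
        deriv_nonneg_of_monotoneOn (a := 0) (b := 1) (by norm_num) (by norm_num)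
          hmono' (hgd 2⁻¹)
      have hzD : x₀ + (2⁻¹:ℝ) • v ∈ D := hmem _ (by norm_num)
      have h2 := hquad (x₀ + (2⁻¹:ℝ) • v) v
      have hvpos : 0 < ‖v‖ ^ 2 := pow_pos (norm_pos_iff.mpr hv) 2
      have hlam0 : 0 ≤ ⨆ i, (hHerm (x₀ + (2⁻¹:ℝ) • v)).eigenvalues i := by
        nlinarith [hq, h2, hvpos]
      exact le_trans hlam0 (hlam_le _ hzD)
    have hRHS0 : 0 ≤ 1 / 2 * Metric.diam D ^ 2 * S := by
      apply mul_nonneg _ hS0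
      positivity
    apply Real.sSup_le _ hRHS0
    rintro r ⟨x, hx, s, hs, α, hα, rfl⟩
    rcases eq_or_lt_of_le hα.1 with hα0 | hα0
    · rw [← hα0]
      have h0 : (1:ℝ) / (0:ℝ) ^ 2 = 0 := by norm_num
      rw [h0, zero_mul]
      exact hRHS0
    · set v := s - x with hvdef
      have hval : (inner ℝ (x + α • v - x) (gradient f x) : ℝ) = α * fderiv ℝ f x v := by
        rw [add_sub_cancel_left, real_inner_smul_left]
        congr 1
        rw [real_inner_comm]
        exact InnerProductSpace.toDual_symm_apply
      have hM : ∀ t ∈ Set.Ioo (0:ℝ) α,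
          fderiv ℝ (fderiv ℝ f) (x + t • v) v v ≤ S * ‖v‖ ^ 2 := by
        intro t ht
        have htI : t ∈ Set.Icc (0:ℝ) 1 := ⟨ht.1.le, ht.2.le.trans hα.2⟩
        have hzD : x + t • v ∈ D := hDconv.add_smul_sub_mem hx hs htI
        exact le_trans (hquad _ v)
          (mul_le_mul_of_nonneg_right (hlam_le _ hzD) (sq_nonneg _))
      have hT := taylor_like_bound (g := fun t : ℝ => f (x + t • v))
        (gd := fun t : ℝ => fderiv ℝ f (x + t • v) v)
        (g2 := fun t : ℝ => fderiv ℝ (fderiv ℝ f) (x + t • v) v v)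
        (M := S * ‖v‖ ^ 2) hα0
        (line_hasDerivAt hf x v) (line_hasDerivAt2 hf x v) hM
      simp only [zero_smul, add_zero] at hT
      rw [hval]
      have hvd : ‖v‖ ≤ Metric.diam D := by
        have h := Metric.dist_le_diam_of_mem hDcomp.isBounded hs hx
        rwa [dist_eq_norm] at h
      have hv2 : ‖v‖ ^ 2 ≤ Metric.diam D ^ 2 := pow_le_pow_left₀ (norm_nonneg v) hvd 2
      have hstep : 1 / α ^ 2 * (f (x + α • v) - f x - α * fderiv ℝ f x v)
          ≤ 1 / α ^ 2 * (S * ‖v‖ ^ 2 * α ^ 2 / 2) := by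
        apply mul_le_mul_of_nonneg_left hT
        positivity
      refine le_trans hstep ?_
      have hαne : α ≠ 0 := ne_of_gt hα0
      rw [show 1 / α ^ 2 * (S * ‖v‖ ^ 2 * α ^ 2 / 2) = S * ‖v‖ ^ 2 / 2 by
        field_simp]
      nlinarith [hS0, hv2]
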